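/- Let G = (V, E) be a graph with a linear order < on E and A ⊆ E. Order the edges of E in a sequence so that all edges of A come first in increasing order, followed by the edges of E \ A in decreasing order; greedily add edges from this sequence to the empty graph on V whenever doing so keeps the graph a forest. Then the resulting graph F = (V, A_f) is a spanning forest of G, every edge of A \ A_f is externally active in F, and every edge of A_f \ A is internally active in F. -/

import Mathlib

open Finset

attribute [local instance] Classical.propDecidable

/-- A multigraph on vertex type `V` with edge index type `E` is given by a map
`ends : E → Sym2 V` (loops and parallel edges are allowed).  For an edge subset
`A ⊆ E`, `edgeGraph ends A` is the simple graph on `V` whose adjacency is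
witnessed by some edge of `A`; it determines the connected components of the
spanning subgraph `(V, A)`. -/
def edgeGraph {V E : Type} (ends : E → Sym2 V) (A : Finset E) : SimpleGraph V where
  Adj a b := a ≠ b ∧ ∃ e ∈ A, ends e = s(a, b)
  symm := by
    constructor
    rintro a b ⟨hab, e, he, hs⟩
    exact ⟨Ne.symm hab, e, he, by rw [hs, Sym2.eq_swap]⟩
  loopless := by constructor; rintro a ⟨h, -⟩; exact h rfl

/-- `kc ends A` is the number of connected components of the spanning subgraph `(V, A)`. -/
noncomputable def kc {V E : Type} (ends : E → Sym2 V) (A : Finset E) : ℕ :=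
  Nat.card (edgeGraph ends A).ConnectedComponent

/-- `(V, A)` is a spanning forest of `(V, E)`: it is a forest
(`|A| + k((V,A)) = |V|`, which rules out loops, parallel edges and cycles)
with as many connected components as the whole graph. -/
def IsSpanningForest {V E : Type} [Fintype V] [Fintype E] (ends : E → Sym2 V)
    (A : Finset E) : Prop :=
  A.card + kc ends A = Fintype.card V ∧ kc ends A = kc ends Finset.univ

/-- `F - e + f`. -/
def swapEdge {E : Type} [DecidableEq E] (A : Finset E) (e f : E) : Finset E :=
  insert f (A.erase e)

/-- `e` is internally active in the spanning forest `(V, A)`. -/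
def InternallyActive {V E : Type} [Fintype V] [Fintype E] [DecidableEq E] [LinearOrder E]
    (ends : E → Sym2 V) (A : Finset E) (e : E) : Prop :=
  e ∈ A ∧ ¬ ∃ f, f ∉ A ∧ e < f ∧ IsSpanningForest ends (swapEdge A e f)

/-- `f` is externally active in the spanning forest `(V, A)`. -/
def ExternallyActive {V E : Type} [Fintype V] [Fintype E] [DecidableEq E] [LinearOrder E]
    (ends : E → Sym2 V) (A : Finset E) (f : E) : Prop :=
  f ∉ A ∧ ¬ ∃ e, e ∈ A ∧ f < e ∧ IsSpanningForest ends (swapEdge A e f)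

/-- The set `E_i(F)` of internally active edges of the spanning forest `F = (V, A)`. -/
noncomputable def intAct {V E : Type} [Fintype V] [Fintype E] [DecidableEq E] [LinearOrder E]
    (ends : E → Sym2 V) (A : Finset E) : Finset E :=
  Finset.univ.filter (InternallyActive ends A)

/-- The set `E_e(F)` of externally active edges of the spanning forest `F = (V, A)`. -/
noncomputable def extAct {V E : Type} [Fintype V] [Fintype E] [DecidableEq E] [LinearOrder E]
    (ends : E → Sym2 V) (A : Finset E) : Finset E :=
  Finset.univ.filter (ExternallyActive ends A)

/-- One greedy step: add the edge `e` to `S` if the result is still a forest. -/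
noncomputable def greedyStep {V E : Type} [Fintype V] [DecidableEq E]
    (ends : E → Sym2 V) (S : Finset E) (e : E) : Finset E :=
  if (insert e S).card + kc ends (insert e S) = Fintype.card V then insert e S else S

/-- The edges of `A` in increasing order. -/
noncomputable def sortInc {E : Type} [LinearOrder E] (A : Finset E) : List E :=
  A.sort (· ≤ ·)

/-- The edges of `E \ A` in decreasing order. -/
noncomputable def sortDecCompl {E : Type} [Fintype E] [DecidableEq E] [LinearOrder E]
    (A : Finset E) : List E :=
  List.reverse (Finset.sort (Finset.univ \ A) (· ≤ ·))

/-- The greedy edge sequence: edges of `A` in increasing order followed by the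
edges of `E \ A` in decreasing order. -/
noncomputable def greedySeq {E : Type} [Fintype E] [DecidableEq E] [LinearOrder E]
    (A : Finset E) : List E :=
  sortInc A ++ sortDecCompl A

/-- The greedy forest: fold the greedy step over the greedy edge sequence,
starting from the edgeless graph. -/
noncomputable def greedyForest {V E : Type} [Fintype V] [Fintype E] [DecidableEq E]
    [LinearOrder E] (ends : E → Sym2 V) (A : Finset E) : Finset E :=
  (greedySeq A).foldl (greedyStep ends) ∅

section Aux

open SimpleGraph

variable {V E : Type} [Fintype V] [DecidableEq E]

set_option linter.unusedSectionVars false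

lemma sym2_cases (z : Sym2 V) : ∃ x y, z = s(x, y) :=
  Sym2.ind (fun x y => ⟨x, y, rfl⟩) z

lemma edgeGraph_mono (ends : E → Sym2 V) {A B : Finset E} (h : A ⊆ B) :
    edgeGraph ends A ≤ edgeGraph ends B := by
  rintro x y ⟨hxy, e, he, hs⟩
  exact ⟨hxy, e, h he, hs⟩

lemma reach_of_adj_all {G H : SimpleGraph V} (h : ∀ x y, G.Adj x y → H.Reachable x y)
    {x y : V} (hr : G.Reachable x y) : H.Reachable x y := by
  obtain ⟨w⟩ := hr
  induction w with
  | nil => exact Reachable.refl _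
  | cons ha _ ih => exact (h _ _ ha).trans ih

lemma card_cc_eq {G H : SimpleGraph V} (h : ∀ a b, G.Reachable a b ↔ H.Reachable a b) :
    Nat.card G.ConnectedComponent = Nat.card H.ConnectedComponent := by
  apply Nat.card_congr
  refine ⟨Quot.lift (fun v => H.connectedComponentMk v)
      (fun v w hr => ConnectedComponent.sound ((h v w).1 hr)),
    Quot.lift (fun v => G.connectedComponentMk v)
      (fun v w hr => ConnectedComponent.sound ((h v w).2 hr)), ?_, ?_⟩
  · exact SimpleGraph.ConnectedComponent.ind fun v => rfl
  · exact SimpleGraph.ConnectedComponent.ind fun v => rfl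

lemma adj_insert_iff (ends : E → Sym2 V) (S : Finset E) (e : E) (x y : V) :
    (edgeGraph ends (insert e S)).Adj x y ↔
      (edgeGraph ends S).Adj x y ∨ (x ≠ y ∧ ends e = s(x, y)) := by
  constructor
  · rintro ⟨hxy, g, hg, hs⟩
    rcases Finset.mem_insert.1 hg with rfl | hg
    · exact Or.inr ⟨hxy, hs⟩
    · exact Or.inl ⟨hxy, g, hg, hs⟩
  · rintro (⟨hxy, g, hg, hs⟩ | ⟨hxy, hs⟩)
    · exact ⟨hxy, g, Finset.mem_insert_of_mem hg, hs⟩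
    · exact ⟨hxy, e, Finset.mem_insert_self e S, hs⟩

lemma reach_insert_aux (ends : E → Sym2 V) {S : Finset E} {e : E} {a b : V}
    (he : ends e = s(a, b)) {x y : V}
    (hr : (edgeGraph ends (insert e S)).Reachable x y) :
    (edgeGraph ends S).Reachable x y ∨
      ((edgeGraph ends S).Reachable x a ∧ (edgeGraph ends S).Reachable b y) ∨
      ((edgeGraph ends S).Reachable x b ∧ (edgeGraph ends S).Reachable a y) := by
  obtain ⟨w⟩ := hr
  induction w with
  | nil => exact Or.inl (Reachable.refl _)
  | @cons x z y ha p ih =>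
    rcases (adj_insert_iff ends S e x z).1 ha with hxz | ⟨hne, hs⟩
    · rcases ih with h | ⟨h1, h2⟩ | ⟨h1, h2⟩
      · exact Or.inl (hxz.reachable.trans h)
      · exact Or.inr (Or.inl ⟨hxz.reachable.trans h1, h2⟩)
      · exact Or.inr (Or.inr ⟨hxz.reachable.trans h1, h2⟩)
    · rcases Sym2.eq_iff.1 (he.symm.trans hs) with ⟨rfl, rfl⟩ | ⟨rfl, rfl⟩
      · rcases ih with h | ⟨h1, h2⟩ | ⟨h1, h2⟩
        · exact Or.inr (Or.inl ⟨Reachable.refl _, h⟩)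
        · exact Or.inl (h1.symm.trans h2)
        · exact Or.inl h2
      · rcases ih with h | ⟨h1, h2⟩ | ⟨h1, h2⟩
        · exact Or.inr (Or.inr ⟨Reachable.refl _, h⟩)
        · exact Or.inl h2
        · exact Or.inl (h1.symm.trans h2)

lemma reach_insert_iff (ends : E → Sym2 V) {S : Finset E} {e : E} {a b : V}
    (he : ends e = s(a, b)) (hab : (edgeGraph ends S).Reachable a b) (x y : V) :
    (edgeGraph ends (insert e S)).Reachable x y ↔ (edgeGraph ends S).Reachable x y := by
  constructor
  · intro hr
    rcases reach_insert_aux ends he hr with h | ⟨h1, h2⟩ | ⟨h1, h2⟩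
    · exact h
    · exact h1.trans (hab.trans h2)
    · exact h1.trans (hab.symm.trans h2)
  · exact fun h => h.mono (edgeGraph_mono ends (Finset.subset_insert e S))

lemma kc_insert_of_reach (ends : E → Sym2 V) {S : Finset E} {e : E}
    (h : ∀ x y, ends e = s(x, y) → (edgeGraph ends S).Reachable x y) :
    kc ends (insert e S) = kc ends S := by
  obtain ⟨a, b, he⟩ := sym2_cases (ends e)
  exact card_cc_eq (reach_insert_iff ends he (h a b he))

lemma kc_insert_of_not_reach (ends : E → Sym2 V) {S : Finset E} {e : E} {a b : V}
    (he : ends e = s(a, b)) (hn : ¬ (edgeGraph ends S).Reachable a b) :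
    kc ends (insert e S) + 1 = kc ends S := by
  set G := edgeGraph ends S with hG
  set G' := edgeGraph ends (insert e S) with hG'
  have hab : a ≠ b := fun h => hn (h ▸ Reachable.refl a)
  have hmono : G ≤ G' := edgeGraph_mono ends (Finset.subset_insert e S)
  have hadj : G'.Adj a b := ⟨hab, e, Finset.mem_insert_self e S, he⟩
  let f : G.ConnectedComponent → G'.ConnectedComponent :=
    Quot.lift (fun v => G'.connectedComponentMk v)
      (fun v w hr => SimpleGraph.ConnectedComponent.sound (hr.mono hmono))
  have key : ∀ v w : V, G'.Reachable v w →
      G.Reachable v w ∨ (G.Reachable v a ∧ G.Reachable b w) ∨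
        (G.Reachable v b ∧ G.Reachable a w) :=
    fun v w h => reach_insert_aux ends he h
  have hcard : Fintype.card G'.ConnectedComponent =
      (Finset.univ.erase (G.connectedComponentMk b)).card := by
    rw [← Finset.card_univ]
    refine (Finset.card_bij (fun c _ => f c) (fun c _ => Finset.mem_univ _) ?_ ?_).symm
    · intro c1 hm1 c2 hm2 hf12
      obtain ⟨v, rfl⟩ := Quot.exists_rep c1
      obtain ⟨w, rfl⟩ := Quot.exists_rep c2
      have h12 : G'.connectedComponentMk v = G'.connectedComponentMk w := hf12
      rcases key v w (SimpleGraph.ConnectedComponent.exact h12) with h | ⟨h1, h2⟩ | ⟨h1, h2⟩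
      · exact SimpleGraph.ConnectedComponent.sound h
      · exact absurd (SimpleGraph.ConnectedComponent.sound h2.symm)
          (Finset.ne_of_mem_erase hm2)
      · exact absurd (SimpleGraph.ConnectedComponent.sound h1)
          (Finset.ne_of_mem_erase hm1)
    · intro y _
      obtain ⟨v, rfl⟩ := Quot.exists_rep y
      by_cases hvb : G.Reachable v b
      · refine ⟨G.connectedComponentMk a, Finset.mem_erase.2
          ⟨fun h => hn (SimpleGraph.ConnectedComponent.exact h), Finset.mem_univ _⟩, ?_⟩
        show G'.connectedComponentMk a = G'.connectedComponentMk v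
        exact SimpleGraph.ConnectedComponent.sound
          (hadj.reachable.trans ((hvb.symm).mono hmono))
      · exact ⟨G.connectedComponentMk v, Finset.mem_erase.2
          ⟨fun h => hvb (SimpleGraph.ConnectedComponent.exact h), Finset.mem_univ _⟩, rfl⟩
  have herase := Finset.card_erase_add_one (Finset.mem_univ (G.connectedComponentMk b))
  have hkc : kc ends (insert e S) = Fintype.card G'.ConnectedComponent := by
    rw [kc, Nat.card_eq_fintype_card]
  have hkc2 : kc ends S = Fintype.card G.ConnectedComponent := by
    rw [kc, Nat.card_eq_fintype_card]
  rw [hkc, hkc2, hcard, herase, Finset.card_univ]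

lemma kc_empty (ends : E → Sym2 V) : kc ends (∅ : Finset E) = Fintype.card V := by
  have key : ∀ v w : V, (edgeGraph ends (∅ : Finset E)).Reachable v w → v = w := by
    intro v w hr
    obtain ⟨p⟩ := hr
    cases p with
    | nil => rfl
    | cons ha _ =>
      obtain ⟨-, e, he, -⟩ := ha
      exact absurd he (Finset.notMem_empty e)
  have : Nat.card (edgeGraph ends (∅ : Finset E)).ConnectedComponent = Nat.card V := by
    apply Nat.card_congr
    exact ⟨Quot.lift id (fun v w hr => key v w hr),
      fun v => (edgeGraph ends (∅ : Finset E)).connectedComponentMk v,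
      SimpleGraph.ConnectedComponent.ind fun v => rfl, fun v => rfl⟩
  rw [kc, this, Nat.card_eq_fintype_card]

lemma le_card_add_kc (ends : E → Sym2 V) (S : Finset E) :
    Fintype.card V ≤ S.card + kc ends S := by
  induction S using Finset.induction_on with
  | empty => simp [kc_empty]
  | @insert e S he ih =>
    obtain ⟨a, b, hab⟩ := sym2_cases (ends e)
    rw [Finset.card_insert_of_notMem he]
    by_cases hr : (edgeGraph ends S).Reachable a b
    · have : kc ends (insert e S) = kc ends S := by
        apply kc_insert_of_reach
        intro x y hxy
        rcases Sym2.eq_iff.1 (hab.symm.trans hxy) with ⟨rfl, rfl⟩ | ⟨rfl, rfl⟩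
        · exact hr
        · exact hr.symm
      omega
    · have := kc_insert_of_not_reach ends hab hr
      omega

/-- Independence (forest) predicate. -/
def Ind (ends : E → Sym2 V) (S : Finset E) : Prop :=
  S.card + kc ends S = Fintype.card V

lemma greedyStep_ind {ends : E → Sym2 V} {S : Finset E}
    (h : Ind ends S) (e : E) : Ind ends (greedyStep ends S e) := by
  unfold greedyStep
  split
  · next hg => exact hg
  · exact h

lemma subset_greedyStep (ends : E → Sym2 V) (S : Finset E) (e : E) :
    S ⊆ greedyStep ends S e := by
  unfold greedyStep
  split
  · exact Finset.subset_insert e S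
  · exact Finset.Subset.refl S

lemma greedyStep_subset (ends : E → Sym2 V) (S : Finset E) (e : E) :
    greedyStep ends S e ⊆ insert e S := by
  unfold greedyStep
  split
  · exact Finset.Subset.refl _
  · exact Finset.subset_insert e S

lemma greedyStep_reject {ends : E → Sym2 V} {S : Finset E} {e : E}
    (h : Ind ends S) (hrej : e ∉ greedyStep ends S e) :
    ∀ x y, ends e = s(x, y) → (edgeGraph ends S).Reachable x y := by
  intro x y hxy
  by_contra hr
  have heS : e ∉ S := fun hm => hrej (subset_greedyStep ends S e hm)
  have hk := kc_insert_of_not_reach ends hxy hr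
  have hcard : (insert e S).card = S.card + 1 := Finset.card_insert_of_notMem heS
  have hguard : (insert e S).card + kc ends (insert e S) = Fintype.card V := by
    unfold Ind at h; omega
  apply hrej
  unfold greedyStep
  rw [if_pos hguard]
  exact Finset.mem_insert_self e S

/-- `g` appears strictly before `f` in the list `l`. -/
def Before {α : Type} (l : List α) (g f : α) : Prop :=
  ∃ p q, l = p ++ f :: q ∧ g ∈ p

lemma fold_spec (ends : E → Sym2 V) :
    ∀ (l : List E) (S : Finset E), Ind ends S →
      Ind ends (l.foldl (greedyStep ends) S) ∧
      S ⊆ l.foldl (greedyStep ends) S ∧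
      (∀ f ∈ l, f ∉ l.foldl (greedyStep ends) S →
        ∃ S', S' ⊆ l.foldl (greedyStep ends) S ∧
          (∀ g ∈ S', g ∈ S ∨ Before l g f) ∧
          ∀ x y, ends f = s(x, y) → (edgeGraph ends S').Reachable x y) := by
  intro l
  induction l with
  | nil =>
    intro S h
    exact ⟨h, Finset.Subset.refl S, by simp⟩
  | cons a l ih =>
    intro S hS
    have hS1 : Ind ends (greedyStep ends S a) := greedyStep_ind hS a
    obtain ⟨h1, h2, h3⟩ := ih (greedyStep ends S a) hS1
    simp only [List.foldl_cons]
    refine ⟨h1, (subset_greedyStep ends S a).trans h2, ?_⟩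
    intro f hf hfT
    rcases List.mem_cons.1 hf with rfl | hf'
    · have hrej : f ∉ greedyStep ends S f := fun hm => hfT (h2 hm)
      exact ⟨S, (subset_greedyStep ends S f).trans h2, fun g hg => Or.inl hg,
        greedyStep_reject hS hrej⟩
    · obtain ⟨S', hS'T, hS'mem, hreach⟩ := h3 f hf' hfT
      refine ⟨S', hS'T, ?_, hreach⟩
      intro g hg
      rcases hS'mem g hg with hg1 | hbef
      · rcases Finset.mem_insert.1 (greedyStep_subset ends S a hg1) with rfl | hgS
        · obtain ⟨p, q, rfl⟩ := List.append_of_mem hf'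
          exact Or.inr ⟨g :: p, q, rfl, List.mem_cons_self⟩
        · exact Or.inl hgS
      · obtain ⟨p, q, hl, hgp⟩ := hbef
        exact Or.inr ⟨a :: p, q, by simp [hl], List.mem_cons_of_mem a hgp⟩

/-- The precedence relation realised by `greedySeq`. -/
def RR {E : Type} [LinearOrder E] (A : Finset E) (g f : E) : Prop :=
  (g ∈ A ∧ f ∈ A ∧ g < f) ∨ (g ∈ A ∧ f ∉ A) ∨ (g ∉ A ∧ f ∉ A ∧ f < g)

lemma pairwise_greedySeq [Fintype E] [LinearOrder E] (A : Finset E) :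
    (greedySeq A).Pairwise (RR A) := by
  unfold greedySeq sortInc sortDecCompl
  rw [List.pairwise_append]
  refine ⟨?_, ?_, ?_⟩
  · refine List.Pairwise.imp_of_mem ?_ (show List.Pairwise (· < ·) _ by convert (Finset.sortedLT_sort A).pairwise)
    intro g f hg hf hlt
    exact Or.inl ⟨(Finset.mem_sort _).1 hg, (Finset.mem_sort _).1 hf, hlt⟩
  · rw [List.pairwise_reverse]
    refine List.Pairwise.imp_of_mem ?_ (show List.Pairwise (· < ·) _ by convert (Finset.sortedLT_sort (Finset.univ \ A)).pairwise)
    intro g f hg hf hlt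
    have hg' : g ∉ A := (Finset.mem_sdiff.1 ((Finset.mem_sort _).1 hg)).2
    have hf' : f ∉ A := (Finset.mem_sdiff.1 ((Finset.mem_sort _).1 hf)).2
    exact Or.inr (Or.inr ⟨hf', hg', hlt⟩)
  · intro x hx y hy
    have hxA : x ∈ A := (Finset.mem_sort _).1 hx
    have hyA : y ∉ A :=
      (Finset.mem_sdiff.1 ((Finset.mem_sort _).1 (List.mem_reverse.1 hy))).2
    exact Or.inr (Or.inl ⟨hxA, hyA⟩)

lemma before_greedySeq [Fintype E] [LinearOrder E] (A : Finset E)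
    {g f : E} (h : Before (greedySeq A) g f) : RR A g f := by
  obtain ⟨p, q, hl, hg⟩ := h
  have hp := pairwise_greedySeq A
  rw [hl, List.pairwise_append] at hp
  exact hp.2.2 g hg f (List.mem_cons_self)

lemma mem_greedySeq [Fintype E] [LinearOrder E] (A : Finset E) (e : E) :
    e ∈ greedySeq A := by
  unfold greedySeq sortInc sortDecCompl
  by_cases h : e ∈ A
  · exact List.mem_append_left _ ((Finset.mem_sort _).2 h)
  · exact List.mem_append_right _ (List.mem_reverse.2
      ((Finset.mem_sort (· ≤ ·)).2 (Finset.mem_sdiff.2 ⟨Finset.mem_univ e, h⟩)))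

lemma no_swap [Fintype E] {ends : E → Sym2 V} {F S' : Finset E} {e f : E}
    (hf : f ∉ F) (hS' : S' ⊆ F.erase e)
    (hreach : ∀ x y, ends f = s(x, y) → (edgeGraph ends S').Reachable x y) :
    ¬ IsSpanningForest ends (swapEdge F e f) := by
  rintro ⟨hcard, -⟩
  have hre : ∀ x y, ends f = s(x, y) → (edgeGraph ends (F.erase e)).Reachable x y :=
    fun x y hxy => (hreach x y hxy).mono (edgeGraph_mono ends hS')
  have hk : kc ends (insert f (F.erase e)) = kc ends (F.erase e) :=
    kc_insert_of_reach ends hre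
  have hfe : f ∉ F.erase e := fun hm => hf (Finset.mem_of_mem_erase hm)
  have h1 : (insert f (F.erase e)).card = (F.erase e).card + 1 :=
    Finset.card_insert_of_notMem hfe
  have h3 := le_card_add_kc ends (F.erase e)
  unfold swapEdge at hcard
  rw [hk, h1] at hcard
  omega

end Aux

/-- The greedy process produces a spanning forest `F = (V, A_f)`
such that every edge of `A \ A_f` is externally active and every edge of
`A_f \ A` is internally active in `F`. -/
theorem greedy_forest_activities {V E : Type} [Fintype V] [Fintype E] [DecidableEq E]
    [LinearOrder E] (ends : E → Sym2 V) (A : Finset E) :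
    IsSpanningForest ends (greedyForest ends A) ∧
    (∀ f ∈ A \ greedyForest ends A, ExternallyActive ends (greedyForest ends A) f) ∧
    (∀ e ∈ greedyForest ends A \ A, InternallyActive ends (greedyForest ends A) e) := by
  have hInd0 : Ind ends (∅ : Finset E) := by
    unfold Ind; simp [kc_empty]
  obtain ⟨hInd, -, hrej⟩ := fold_spec ends (greedySeq A) ∅ hInd0
  have hFdef : greedyForest ends A = (greedySeq A).foldl (greedyStep ends) ∅ := rfl
  set F : Finset E := greedyForest ends A with hF
  rw [← hFdef] at hInd hrej
  -- the rejected-edge specification, rephrased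
  have hspec : ∀ f, f ∉ F → ∃ S', S' ⊆ F ∧ (∀ g ∈ S', RR A g f) ∧
      ∀ x y, ends f = s(x, y) → (edgeGraph ends S').Reachable x y := by
    intro f hfF
    obtain ⟨S', hS'F, hS'mem, hre⟩ := hrej f (mem_greedySeq A f) hfF
    refine ⟨S', hS'F, ?_, hre⟩
    intro g hg
    rcases hS'mem g hg with hg0 | hbef
    · exact absurd hg0 (Finset.notMem_empty g)
    · exact before_greedySeq A hbef
  have hspanning : IsSpanningForest ends F := by
    refine ⟨hInd, ?_⟩
    apply card_cc_eq
    intro a b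
    constructor
    · exact fun h => h.mono (edgeGraph_mono ends (Finset.subset_univ F))
    · apply reach_of_adj_all
      rintro x y ⟨hxy, g, -, hs⟩
      by_cases hg : g ∈ F
      · exact SimpleGraph.Adj.reachable ⟨hxy, g, hg, hs⟩
      · obtain ⟨S', hS'F, -, hre⟩ := hspec g hg
        exact (hre x y hs).mono (edgeGraph_mono ends hS'F)
  refine ⟨hspanning, ?_, ?_⟩
  · -- external activity
    intro f hf
    obtain ⟨hfA, hfF⟩ := Finset.mem_sdiff.1 hf
    refine ⟨hfF, ?_⟩
    rintro ⟨e, heF, hlt, hsf⟩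
    obtain ⟨S', hS'F, hS'R, hre⟩ := hspec f hfF
    refine no_swap hfF ?_ hre hsf
    intro g hg
    refine Finset.mem_erase.2 ⟨?_, hS'F hg⟩
    rintro rfl
    rcases hS'R g hg with ⟨-, -, h⟩ | ⟨-, h⟩ | ⟨-, h, -⟩
    · exact absurd (hlt.trans h) (lt_irrefl _)
    · exact h hfA
    · exact h hfA
  · -- internal activity
    intro e he
    obtain ⟨heF, heA⟩ := Finset.mem_sdiff.1 he
    refine ⟨heF, ?_⟩
    rintro ⟨f, hfF, hlt, hsf⟩
    obtain ⟨S', hS'F, hS'R, hre⟩ := hspec f hfF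
    refine no_swap hfF ?_ hre hsf
    intro g hg
    refine Finset.mem_erase.2 ⟨?_, hS'F hg⟩
    rintro rfl
    rcases hS'R g hg with ⟨h, -, -⟩ | ⟨h, -⟩ | ⟨-, -, h⟩
    · exact heA h
    · exact heA h
    · exact absurd (hlt.trans h) (lt_irrefl _)
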